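/- arXiv:1004.0918 — 5 statements merged into one kernel-verified Lean document; each statement's English description precedes it below -/
import Mathlib

section
/- For every non-unital k-algebra R, the path algebra ER := ker(∂⁰_x : R[x] → R) — the non-unital subalgebra of R[x] consisting of polynomials with zero constant coefficient — is contractible: there exists a non-unital k-algebra homomorphism h : ER → (ER)[y] with ∂⁰_y∘h = 0 and ∂¹_y∘h = id_{ER}; explicitly h is induced by the substitution x ↦ xy, sending p(x) = Σ_{i≥1} pᵢ xⁱ to Σ_{i≥1} (pᵢ xⁱ)·yⁱ. -/
noncomputable section

namespace NUPolyAux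

/-! Auxiliary constructions at the level of finitely supported functions. -/

variable {R : Type*} [NonUnitalRing R]

/-- Convolution product of coefficient sequences. -/
def mulF (p q : ℕ →₀ R) : ℕ →₀ R :=
  p.sum fun i a => q.sum fun j b => Finsupp.single (i + j) (a * b)

/-- Interpretation of a coefficient sequence as a polynomial over the
unitization of `R`. -/
def toPUF (p : ℕ →₀ R) : Polynomial (Unitization ℤ R) :=
  p.sum fun i a => Polynomial.monomial i (Unitization.inr a)

theorem toPUF_single (i : ℕ) (a : R) :
    toPUF (Finsupp.single i a) = Polynomial.monomial i (Unitization.inr a) := by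
  rw [toPUF, Finsupp.sum_single_index]
  simp

theorem coeff_toPUF (p : ℕ →₀ R) (n : ℕ) :
    (toPUF p).coeff n = Unitization.inr (p n) := by
  classical
  rw [toPUF, Finsupp.sum, Polynomial.finset_sum_coeff]
  simp only [Polynomial.coeff_monomial]
  rw [Finset.sum_ite_eq' p.support n fun i => Unitization.inr (p i)]
  split
  · rfl
  · next h => rw [Finsupp.notMem_support_iff.mp h, Unitization.inr_zero]

theorem toPUF_injective : Function.Injective (toPUF (R := R)) := by
  intro p q h
  ext n
  apply Unitization.inr_injective (R := ℤ)
  rw [← coeff_toPUF, ← coeff_toPUF, h]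

theorem toPUF_zero : toPUF (0 : ℕ →₀ R) = 0 := by
  refine Polynomial.ext fun n => ?_
  rw [coeff_toPUF, Finsupp.zero_apply, Unitization.inr_zero, Polynomial.coeff_zero]

theorem toPUF_add (p q : ℕ →₀ R) : toPUF (p + q) = toPUF p + toPUF q := by
  refine Polynomial.ext fun n => ?_
  rw [coeff_toPUF, Polynomial.coeff_add, coeff_toPUF, coeff_toPUF,
    Finsupp.add_apply, Unitization.inr_add]

/-- `toPUF` as an additive monoid homomorphism. -/
def toPUFHom : (ℕ →₀ R) →+ Polynomial (Unitization ℤ R) where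
  toFun := toPUF
  map_zero' := toPUF_zero
  map_add' := toPUF_add

@[simp] theorem toPUFHom_apply (p : ℕ →₀ R) : toPUFHom p = toPUF p := rfl

theorem toPUF_mulF (p q : ℕ →₀ R) : toPUF (mulF p q) = toPUF p * toPUF q := by
  classical
  have h1 : toPUF (mulF p q)
      = p.sum fun i a => q.sum fun j b =>
          Polynomial.monomial (i + j) (Unitization.inr (a * b)) := by
    rw [mulF, ← toPUFHom_apply, map_finsuppSum]
    refine Finsupp.sum_congr fun i _ => ?_
    rw [map_finsuppSum]
    exact Finsupp.sum_congr fun j _ => toPUF_single _ _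
  rw [h1, toPUF, toPUF, Finsupp.sum_mul]
  refine Finsupp.sum_congr fun i _ => ?_
  rw [Finsupp.mul_sum]
  refine Finsupp.sum_congr fun j _ => ?_
  rw [Polynomial.monomial_mul_monomial, Unitization.inr_mul]

end NUPolyAux

/-- The non-unital polynomial algebra `R[x]` over a non-unital ring `R`:
the type of finitely supported coefficient sequences (i.e. of
`AddMonoidAlgebra R ℕ`) equipped with the convolution product. -/
structure NUPoly (R : Type*) [NonUnitalRing R] where
  /-- the coefficient sequence of a non-unital polynomial -/
  toFinsupp : ℕ →₀ R

namespace NUPoly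

open NUPolyAux

variable {R : Type*} [NonUnitalRing R]

theorem toFinsupp_injective :
    Function.Injective (toFinsupp : NUPoly R → (ℕ →₀ R)) := by
  rintro ⟨p⟩ ⟨q⟩ h
  simpa using h

instance instZero : Zero (NUPoly R) := ⟨⟨0⟩⟩
instance instAdd : Add (NUPoly R) := ⟨fun p q => ⟨p.toFinsupp + q.toFinsupp⟩⟩
instance instNeg : Neg (NUPoly R) := ⟨fun p => ⟨-p.toFinsupp⟩⟩
instance instSub : Sub (NUPoly R) := ⟨fun p q => ⟨p.toFinsupp - q.toFinsupp⟩⟩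
instance instSMul {S : Type*} [SMulZeroClass S R] : SMul S (NUPoly R) :=
  ⟨fun c p => ⟨c • p.toFinsupp⟩⟩
instance instMul : Mul (NUPoly R) := ⟨fun p q => ⟨mulF p.toFinsupp q.toFinsupp⟩⟩

@[simp] theorem toFinsupp_zero : (0 : NUPoly R).toFinsupp = 0 := rfl
@[simp] theorem toFinsupp_add (p q : NUPoly R) :
    (p + q).toFinsupp = p.toFinsupp + q.toFinsupp := rfl
@[simp] theorem toFinsupp_smul {S : Type*} [SMulZeroClass S R] (c : S) (p : NUPoly R) :
    (c • p).toFinsupp = c • p.toFinsupp := rfl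
@[simp] theorem toFinsupp_mul (p q : NUPoly R) :
    (p * q).toFinsupp = mulF p.toFinsupp q.toFinsupp := rfl

instance instAddCommGroup : AddCommGroup (NUPoly R) :=
  toFinsupp_injective.addCommGroup toFinsupp rfl (fun _ _ => rfl) (fun _ => rfl)
    (fun _ _ => rfl) (fun _ _ => rfl) (fun _ _ => rfl)

/-- The interpretation of `p ∈ R[x]` as a polynomial over the unitization of `R`. -/
def toPU (p : NUPoly R) : Polynomial (Unitization ℤ R) := toPUF p.toFinsupp

theorem toPU_injective : Function.Injective (toPU (R := R)) :=
  fun _ _ h => toFinsupp_injective (toPUF_injective h)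

theorem toPU_zero : toPU (0 : NUPoly R) = 0 := toPUF_zero
theorem toPU_add (p q : NUPoly R) : toPU (p + q) = toPU p + toPU q := toPUF_add _ _
theorem toPU_mul (p q : NUPoly R) : toPU (p * q) = toPU p * toPU q := toPUF_mulF _ _

instance instNonUnitalRing : NonUnitalRing (NUPoly R) :=
  { instAddCommGroup, instMul with
    left_distrib := fun p q r => toPU_injective <| by
      rw [toPU_mul, toPU_add, toPU_add, toPU_mul, toPU_mul, mul_add]
    right_distrib := fun p q r => toPU_injective <| by
      rw [toPU_mul, toPU_add, toPU_add, toPU_mul, toPU_mul, add_mul]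
    zero_mul := fun p => toPU_injective <| by
      rw [toPU_mul, toPU_zero, zero_mul]
    mul_zero := fun p => toPU_injective <| by
      rw [toPU_mul, toPU_zero, mul_zero]
    mul_assoc := fun p q r => toPU_injective <| by
      rw [toPU_mul, toPU_mul, toPU_mul, toPU_mul, mul_assoc] }

theorem mul_def (p q : NUPoly R) :
    (p * q).toFinsupp
      = p.toFinsupp.sum fun i a => q.toFinsupp.sum fun j b =>
          Finsupp.single (i + j) (a * b) := rfl

theorem mul_apply (p q : NUPoly R) (n : ℕ) :
    (p * q).toFinsupp n = ∑ x ∈ Finset.HasAntidiagonal.antidiagonal n, p.toFinsupp x.1 * q.toFinsupp x.2 := by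
  apply Unitization.inr_injective (R := ℤ)
  have h : (Unitization.inr ((p * q).toFinsupp n) : Unitization ℤ R)
      = ∑ x ∈ Finset.HasAntidiagonal.antidiagonal n,
          (Unitization.inr (p.toFinsupp x.1) * Unitization.inr (q.toFinsupp x.2) :
            Unitization ℤ R) := by
    rw [← coeff_toPUF, ← toPU, toPU_mul, Polynomial.coeff_mul]
    exact Finset.sum_congr rfl fun x _ => by
      rw [toPU, toPU, coeff_toPUF, coeff_toPUF]
  rw [h]
  simp only [← Unitization.inr_mul]
  exact (map_sum (Unitization.inrHom ℤ ℤ R) (fun x => p.toFinsupp x.1 * q.toFinsupp x.2)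
    (Finset.HasAntidiagonal.antidiagonal n)).symm

section Module

variable {k : Type*} [Semiring k] [Module k R]

/-- `toFinsupp` as an additive monoid homomorphism. -/
def toFinsuppAddHom : NUPoly R →+ (ℕ →₀ R) where
  toFun := toFinsupp
  map_zero' := rfl
  map_add' := fun _ _ => rfl

instance instModule : Module k (NUPoly R) :=
  Function.Injective.module k toFinsuppAddHom toFinsupp_injective fun _ _ => rfl

end Module

section Scalars

variable (k : Type*) [CommRing k] [Module k R]

instance instIsScalarTower [IsScalarTower k R R] :
    IsScalarTower k (NUPoly R) (NUPoly R) := by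
  refine ⟨fun c p q => ?_⟩
  rw [smul_eq_mul, smul_eq_mul]
  apply toFinsupp_injective
  simp only [toFinsupp_mul, toFinsupp_smul]
  rw [mulF, mulF, Finsupp.sum_smul_index' (by simp), Finsupp.smul_sum]
  refine Finsupp.sum_congr fun i _ => ?_
  rw [Finsupp.smul_sum]
  refine Finsupp.sum_congr fun j _ => ?_
  rw [smul_mul_assoc, Finsupp.smul_single]

instance instSMulCommClass [SMulCommClass k R R] :
    SMulCommClass k (NUPoly R) (NUPoly R) := by
  refine ⟨fun c p q => ?_⟩
  rw [smul_eq_mul, smul_eq_mul]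
  apply toFinsupp_injective
  simp only [toFinsupp_mul, toFinsupp_smul]
  rw [mulF, mulF, Finsupp.smul_sum]
  refine Finsupp.sum_congr fun i _ => ?_
  rw [Finsupp.sum_smul_index' (by simp), Finsupp.smul_sum]
  refine Finsupp.sum_congr fun j _ => ?_
  rw [mul_smul_comm, Finsupp.smul_single]

end Scalars

/-- The non-unital polynomial `r·xⁱ`. -/
def single (i : ℕ) (a : R) : NUPoly R := ⟨Finsupp.single i a⟩

/-- Evaluation at `x = 0` (the constant coefficient), as a non-unital algebra
homomorphism `∂⁰ : R[x] → R`. -/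
def atZero (k R : Type*) [CommRing k] [NonUnitalRing R] [Module k R] :
    NUPoly R →ₙₐ[k] R where
  toFun p := p.toFinsupp 0
  map_add' p q := by
    show (p + q).toFinsupp 0 = p.toFinsupp 0 + q.toFinsupp 0
    rw [toFinsupp_add, Finsupp.add_apply]
  map_smul' c p := by
    show (c • p).toFinsupp 0 = c • p.toFinsupp 0
    rw [toFinsupp_smul, Finsupp.smul_apply]
  map_zero' := rfl
  map_mul' p q := by
    show (p * q).toFinsupp 0 = p.toFinsupp 0 * q.toFinsupp 0
    rw [mul_apply, Finset.Nat.antidiagonal_zero, Finset.sum_singleton]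

/-- Evaluation at `x = 1` (the sum of the coefficients), as a non-unital algebra
homomorphism `∂¹ : R[x] → R`. -/
def coeffSum (k R : Type*) [CommRing k] [NonUnitalRing R] [Module k R] :
    NUPoly R →ₙₐ[k] R where
  toFun p := p.toFinsupp.sum fun _ a => a
  map_add' p q := by
    show ((p + q).toFinsupp.sum fun _ a => a)
      = (p.toFinsupp.sum fun _ a => a) + q.toFinsupp.sum fun _ a => a
    rw [toFinsupp_add]
    exact Finsupp.sum_add_index' (fun _ => rfl) (fun _ _ _ => rfl)
  map_smul' c p := by
    show ((c • p).toFinsupp.sum fun _ a => a) = c • p.toFinsupp.sum fun _ a => a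
    rw [toFinsupp_smul]
    have h1 : ((c • p.toFinsupp).sum fun _ a => a) = p.toFinsupp.sum fun _ a => c • a :=
      Finsupp.sum_smul_index' (h := fun (_ : ℕ) (a : R) => a) (fun _ => rfl)
    have h2 : (c • p.toFinsupp.sum fun _ a => a) = p.toFinsupp.sum fun _ a => c • a :=
      Finsupp.smul_sum
    rw [h1, h2]
  map_zero' := by
    show ((0 : NUPoly R).toFinsupp.sum fun _ a => a) = 0
    rw [toFinsupp_zero]
    exact Finsupp.sum_zero_index
  map_mul' p q := by
    classical
    show ((p * q).toFinsupp.sum fun _ a => a)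
      = (p.toFinsupp.sum fun _ a => a) * q.toFinsupp.sum fun _ a => a
    rw [mul_def, Finsupp.sum_sum_index (fun _ => rfl) (fun _ _ _ => rfl)]
    have h1 : (p.toFinsupp.sum fun i a =>
          (q.toFinsupp.sum fun j b => Finsupp.single (i + j) (a * b)).sum fun _ c => c)
        = p.toFinsupp.sum fun i a => q.toFinsupp.sum fun j b => a * b := by
      refine Finsupp.sum_congr fun i _ => ?_
      rw [Finsupp.sum_sum_index (fun _ => rfl) (fun _ _ _ => rfl)]
      exact Finsupp.sum_congr fun j _ => Finsupp.sum_single_index rfl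
    have h2 : (p.toFinsupp.sum fun i a => q.toFinsupp.sum fun j b => a * b)
        = p.toFinsupp.sum fun i a => a * q.toFinsupp.sum fun _ b => b :=
      Finsupp.sum_congr fun i _ => (Finsupp.mul_sum _ _).symm
    rw [h1, h2, ← Finsupp.sum_mul]

@[simp] theorem atZero_apply (k : Type*) [CommRing k] [Module k R] (p : NUPoly R) :
    atZero k R p = p.toFinsupp 0 := rfl

@[simp] theorem coeffSum_apply (k : Type*) [CommRing k] [Module k R] (p : NUPoly R) :
    coeffSum k R p = p.toFinsupp.sum fun _ a => a := rfl

end NUPoly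

section Homotopy

variable (k : Type*) [CommRing k]
variable {A B : Type*} [NonUnitalRing A] [Module k A] [NonUnitalRing B] [Module k B]

/-- Two non-unital algebra homomorphisms `f₀ f₁ : A → B` are *elementary homotopic*
if there is a homomorphism `H : A → B[x]` with `∂⁰ ∘ H = f₀` and `∂¹ ∘ H = f₁`. -/
def ElemHomotopic (f₀ f₁ : A →ₙₐ[k] B) : Prop :=
  ∃ H : A →ₙₐ[k] NUPoly B,
    (NUPoly.atZero k B).comp H = f₀ ∧ (NUPoly.coeffSum k B).comp H = f₁

/-- *Homotopy* of non-unital algebra homomorphisms: the equivalence relation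
generated by elementary homotopy. -/
def NUHomotopic (f₀ f₁ : A →ₙₐ[k] B) : Prop :=
  Relation.EqvGen (ElemHomotopic k) f₀ f₁

end Homotopy

/-- The path algebra `ER := ker(∂⁰ : R[x] → R)`, the non-unital subalgebra of
`R[x]` consisting of the polynomials with zero constant coefficient. -/
noncomputable def pathAlgebra (k : Type*) [CommRing k] (R : Type*) [NonUnitalRing R]
    [Module k R] : NonUnitalSubalgebra k (NUPoly R) where
  carrier := {p | NUPoly.atZero k R p = 0}
  add_mem' := fun {p q} hp hq => by
    simp only [Set.mem_setOf_eq] at *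
    rw [map_add, hp, hq, add_zero]
  zero_mem' := by simp only [Set.mem_setOf_eq, map_zero]
  mul_mem' := fun {p q} hp hq => by
    simp only [Set.mem_setOf_eq] at *
    rw [map_mul, hp, zero_mul]
  smul_mem' := fun c p hp => by
    simp only [Set.mem_setOf_eq] at *
    rw [map_smul, hp, smul_zero]

set_option linter.unusedSectionVars false

namespace PathContractAux

variable {k : Type*} [CommRing k] {R : Type*}
  [NonUnitalRing R] [Module k R] [SMulCommClass k R R] [IsScalarTower k R R]

open NUPoly

theorem single_zero (i : ℕ) : (NUPoly.single i (0 : R)) = 0 :=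
  NUPoly.toFinsupp_injective (by simp [NUPoly.single])

theorem single_add (i : ℕ) (a b : R) :
    NUPoly.single i (a + b) = NUPoly.single i a + NUPoly.single i b :=
  NUPoly.toFinsupp_injective (by simp [NUPoly.single, Finsupp.single_add])

theorem single_smul (i : ℕ) (c : k) (a : R) :
    NUPoly.single i (c • a) = c • NUPoly.single i a :=
  NUPoly.toFinsupp_injective (by simp [NUPoly.single, Finsupp.smul_single])

/-- `single i` as an additive monoid homomorphism. -/
def singleAddHom (i : ℕ) : R →+ NUPoly R where
  toFun := NUPoly.single i
  map_zero' := single_zero i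
  map_add' := single_add i

theorem single_mul_single (i j : ℕ) (a b : R) :
    NUPoly.single i a * NUPoly.single j b = NUPoly.single (i + j) (a * b) := by
  apply NUPoly.toFinsupp_injective
  show NUPolyAux.mulF (Finsupp.single i a) (Finsupp.single j b) = Finsupp.single (i + j) (a * b)
  rw [NUPolyAux.mulF, Finsupp.sum_single_index (by simp), Finsupp.sum_single_index (by simp)]

variable (k)

/-- The `n`-th coefficient of `h p`, as an element of the path algebra. -/
def coeffEl (p : pathAlgebra k R) (n : ℕ) : pathAlgebra k R :=
  ⟨NUPoly.single n ((p : NUPoly R).toFinsupp n), by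
    show NUPoly.atZero k R _ = 0
    rw [NUPoly.atZero_apply]
    show (Finsupp.single n ((p : NUPoly R).toFinsupp n)) 0 = 0
    rcases n with _ | n
    · rw [Finsupp.single_eq_same]
      exact p.2
    · exact Finsupp.single_eq_of_ne (by simp)⟩

@[simp] theorem coe_coeffEl (p : pathAlgebra k R) (n : ℕ) :
    ((coeffEl k p n : pathAlgebra k R) : NUPoly R)
      = NUPoly.single n ((p : NUPoly R).toFinsupp n) := rfl

theorem coeffEl_eq_zero (p : pathAlgebra k R) (n : ℕ)
    (h : (p : NUPoly R).toFinsupp n = 0) : coeffEl k p n = 0 := by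
  apply Subtype.ext
  rw [coe_coeffEl, h]
  exact single_zero n

/-- The contracting homotopy as a bare function. -/
def hFun (p : pathAlgebra k R) : NUPoly (pathAlgebra k R) :=
  ⟨Finsupp.onFinset (p : NUPoly R).toFinsupp.support (coeffEl k p)
    (fun n hn => by
      rw [Finsupp.mem_support_iff]
      intro h
      exact hn (coeffEl_eq_zero k p n h))⟩

@[simp] theorem hFun_coeff (p : pathAlgebra k R) (n : ℕ) :
    (hFun k p).toFinsupp n = coeffEl k p n := rfl

theorem nupoly_sub_ext {P Q : NUPoly (pathAlgebra k R)}
    (h : ∀ n, ((P.toFinsupp n : pathAlgebra k R) : NUPoly R)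
        = ((Q.toFinsupp n : pathAlgebra k R) : NUPoly R)) : P = Q := by
  apply NUPoly.toFinsupp_injective
  ext n
  exact h n

set_option maxHeartbeats 1000000
set_option synthInstance.maxHeartbeats 400000

/-- The contracting homotopy as a non-unital algebra homomorphism. -/
def hHom : pathAlgebra k R →ₙₐ[k] NUPoly (pathAlgebra k R) where
  toFun := hFun k
  map_add' p q := by
    apply nupoly_sub_ext k
    intro n
    simp only [hFun_coeff, coe_coeffEl, NUPoly.toFinsupp_add, Finsupp.add_apply,
      AddMemClass.coe_add, single_add]
  map_smul' c p := by
    apply nupoly_sub_ext k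
    intro n
    simp only [hFun_coeff, coe_coeffEl, NUPoly.toFinsupp_smul, Finsupp.smul_apply,
      SetLike.val_smul, single_smul, MonoidHom.id_apply]
  map_zero' := by
    apply nupoly_sub_ext k
    intro n
    simp only [hFun_coeff, coe_coeffEl, NUPoly.toFinsupp_zero, Finsupp.zero_apply,
      ZeroMemClass.coe_zero, single_zero]
  map_mul' p q := by
    apply nupoly_sub_ext k
    intro n
    rw [hFun_coeff, coe_coeffEl]
    have hc : ((p * q : pathAlgebra k R) : NUPoly R) = (p : NUPoly R) * (q : NUPoly R) := rfl
    rw [hc, NUPoly.mul_apply]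
    have hL : NUPoly.single n (∑ x ∈ Finset.HasAntidiagonal.antidiagonal n,
          (p : NUPoly R).toFinsupp x.1 * (q : NUPoly R).toFinsupp x.2)
        = ∑ x ∈ Finset.HasAntidiagonal.antidiagonal n,
            NUPoly.single n ((p : NUPoly R).toFinsupp x.1 * (q : NUPoly R).toFinsupp x.2) :=
      map_sum (singleAddHom n) _ _
    rw [hL, NUPoly.mul_apply, AddSubmonoidClass.coe_finset_sum]
    refine Finset.sum_congr rfl fun x hx => ?_
    have hxn : x.1 + x.2 = n := Finset.HasAntidiagonal.mem_antidiagonal.mp hx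
    rw [MulMemClass.coe_mul, hFun_coeff, hFun_coeff, coe_coeffEl, coe_coeffEl,
      single_mul_single, hxn]

end PathContractAux

set_option maxHeartbeats 1000000
set_option synthInstance.maxHeartbeats 400000


/-- For every non-unital `k`-algebra `R`, the path algebra
`ER = ker(∂⁰ : R[x] → R)` is contractible: there is a non-unital `k`-algebra
homomorphism `h : ER → (ER)[y]` with `∂⁰_y ∘ h = 0` and `∂¹_y ∘ h = id`;
explicitly `h` is induced by the substitution `x ↦ x·y`, i.e. the `i`-th
coefficient of `h p` is the polynomial `pᵢ·xⁱ`. -/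
theorem pathAlgebra_contractible
    (k : Type*) [CommRing k] (R : Type*)
    [NonUnitalRing R] [Module k R] [SMulCommClass k R R] [IsScalarTower k R R] :
    ∃ h : pathAlgebra k R →ₙₐ[k] NUPoly (pathAlgebra k R),
      (∀ (p : pathAlgebra k R) (i : ℕ),
        (((h p).toFinsupp i : pathAlgebra k R) : NUPoly R)
          = NUPoly.single i ((p : NUPoly R).toFinsupp i)) ∧
      (NUPoly.atZero k (pathAlgebra k R)).comp h = 0 ∧
      (NUPoly.coeffSum k (pathAlgebra k R)).comp h
        = NonUnitalAlgHom.id k (pathAlgebra k R) := by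
  classical
  open PathContractAux in
  refine ⟨hHom k, fun p i => rfl, ?_, ?_⟩
  · -- atZero ∘ h = 0
    refine DFunLike.ext _ _ fun p => ?_
    show NUPoly.atZero k (pathAlgebra k R) (hFun k p) = 0
    have h0 : ((p : NUPoly R)).toFinsupp 0 = 0 := p.2
    rw [NUPoly.atZero_apply, hFun_coeff]
    apply Subtype.ext
    rw [coe_coeffEl, h0, single_zero]
    exact (ZeroMemClass.coe_zero _).symm
  · -- coeffSum ∘ h = id
    refine DFunLike.ext _ _ fun p => ?_
    show NUPoly.coeffSum k (pathAlgebra k R) (hFun k p) = p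
    rw [NUPoly.coeffSum_apply]
    apply Subtype.ext
    rw [Finsupp.sum, AddSubmonoidClass.coe_finset_sum]
    have hsub : (hFun k p).toFinsupp.support ⊆ (p : NUPoly R).toFinsupp.support :=
      Finsupp.support_onFinset_subset (hf := fun n hn => by
        rw [Finsupp.mem_support_iff]
        intro h
        exact hn (coeffEl_eq_zero k p n h))
    rw [Finset.sum_subset hsub (fun n _ hn => by
      rw [Finsupp.notMem_support_iff] at hn
      rw [hn]; rfl)]
    have heq : ∑ n ∈ (p : NUPoly R).toFinsupp.support,
        (((hFun k p).toFinsupp n : pathAlgebra k R) : NUPoly R)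
        = ∑ n ∈ (p : NUPoly R).toFinsupp.support,
            NUPoly.single n ((p : NUPoly R).toFinsupp n) :=
      Finset.sum_congr rfl fun n _ => rfl
    rw [heq]
    apply NUPoly.toFinsupp_injective
    have hmap : (∑ n ∈ (p : NUPoly R).toFinsupp.support,
          NUPoly.single n ((p : NUPoly R).toFinsupp n)).toFinsupp
        = ∑ n ∈ (p : NUPoly R).toFinsupp.support,
            (NUPoly.single n ((p : NUPoly R).toFinsupp n)).toFinsupp :=
      map_sum NUPoly.toFinsuppAddHom _ _
    rw [hmap]
    show (∑ n ∈ (p : NUPoly R).toFinsupp.support,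
        Finsupp.single n ((p : NUPoly R).toFinsupp n)) = (p : NUPoly R).toFinsupp
    exact Finsupp.sum_single _
end
end

section
/- Let R be a non-unital k-algebra and p ∈ R[x]. Then ∂⁰_x(p) = 0 and ∂¹_x(p) = 0 if and only if there exists q ∈ R[x] with p = q·x² − q·x, where multiplication by the central variable x is the coefficient-shift operation on R[x]. In other words, the loop algebra ΩR = ker(∂⁰_x) ∩ ker(∂¹_x) ⊆ R[x], i.e. the kernel of ∂¹_x restricted to the path algebra ER = ker(∂⁰_x), equals (x² − x)·R[x]. -/
noncomputable section

namespace NUPoly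

/-- Multiplication by the central variable `x`, i.e. the coefficient-shift
operation `Σ pᵢ xⁱ ↦ Σ pᵢ xⁱ⁺¹` on `R[x]`. -/
noncomputable def shiftX {R : Type*} [NonUnitalRing R] (p : NUPoly R) : NUPoly R :=
  ⟨Finsupp.mapDomain (· + 1) p.toFinsupp⟩

end NUPoly

section ShiftAux

variable {R : Type*} [NonUnitalRing R]

theorem NUPoly.toFinsupp_sub (p q : NUPoly R) :
    (p - q).toFinsupp = p.toFinsupp - q.toFinsupp := rfl

theorem NUPoly.shiftX_apply_succ (q : NUPoly R) (n : ℕ) :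
    (NUPoly.shiftX q).toFinsupp (n + 1) = q.toFinsupp n := by
  rw [NUPoly.shiftX]
  exact Finsupp.mapDomain_apply (add_left_injective 1) _ n

theorem NUPoly.shiftX_apply_zero (q : NUPoly R) :
    (NUPoly.shiftX q).toFinsupp 0 = 0 := by
  rw [NUPoly.shiftX]
  apply Finsupp.mapDomain_notin_range
  rintro ⟨m, hm⟩
  exact Nat.succ_ne_zero m hm

theorem NUPoly.coeffSum_shiftX (k : Type*) [CommRing k] [Module k R] (q : NUPoly R) :
    NUPoly.coeffSum k R (NUPoly.shiftX q) = NUPoly.coeffSum k R q := by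
  simp only [NUPoly.coeffSum_apply, NUPoly.shiftX]
  exact Finsupp.sum_mapDomain_index (fun _ => rfl) (fun _ _ _ => rfl)

end ShiftAux


/-- Let `R` be a non-unital `k`-algebra and `p ∈ R[x]`.
Then `∂⁰(p) = 0` and `∂¹(p) = 0` if and only if there exists `q ∈ R[x]` with
`p = q·x² - q·x`, where multiplication by the central variable `x` is the
coefficient-shift operation on `R[x]`.  In other words, the loop algebra
`ΩR = ker ∂⁰ ∩ ker ∂¹` equals `(x² - x)·R[x]`. -/
theorem loopAlgebra_eq_xsq_sub_x_mul
    (k : Type*) [CommRing k] (R : Type*)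
    [NonUnitalRing R] [Module k R] [SMulCommClass k R R] [IsScalarTower k R R]
    (p : NUPoly R) :
    (NUPoly.atZero k R p = 0 ∧ NUPoly.coeffSum k R p = 0) ↔
      ∃ q : NUPoly R, p = NUPoly.shiftX (NUPoly.shiftX q) - NUPoly.shiftX q := by
  classical
  constructor
  · rintro ⟨h0, h1⟩
    rw [NUPoly.atZero_apply] at h0
    rw [NUPoly.coeffSum_apply] at h1
    set N := p.toFinsupp.support.sup id with hN
    set f : ℕ → R := fun n => -∑ i ∈ Finset.range (n + 2), p.toFinsupp i with hf
    have hsupp : ∀ n, f n ≠ 0 → n ∈ Finset.range N := by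
      intro n hn
      by_contra hmem
      apply hn
      have hle : N ≤ n := by
        by_contra h
        exact hmem (Finset.mem_range.mpr (by omega))
      have hsub : p.toFinsupp.support ⊆ Finset.range (n + 2) := by
        intro i hi
        have := Finset.le_sup (f := id) hi
        exact Finset.mem_range.mpr (by simp only [id] at this; omega)
      have := Finsupp.sum_of_support_subset p.toFinsupp hsub (fun _ a => a)
        (fun i _ => rfl)
      rw [hf]
      simp only
      rw [← this, h1, neg_zero]
    set Q : NUPoly R := ⟨Finsupp.onFinset (Finset.range N) f hsupp⟩ with hQ
    refine ⟨Q, ?_⟩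
    apply NUPoly.toFinsupp_injective
    ext n
    rw [NUPoly.toFinsupp_sub, Finsupp.sub_apply]
    match n with
    | 0 =>
      rw [h0, NUPoly.shiftX_apply_zero, NUPoly.shiftX_apply_zero, sub_zero]
    | 1 =>
      show p.toFinsupp 1 = (NUPoly.shiftX (NUPoly.shiftX Q)).toFinsupp (0 + 1)
        - (NUPoly.shiftX Q).toFinsupp (0 + 1)
      rw [NUPoly.shiftX_apply_succ, NUPoly.shiftX_apply_zero,
        NUPoly.shiftX_apply_succ]
      show p.toFinsupp 1 = 0 - f 0
      rw [hf]
      simp only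
      rw [Finset.sum_range_succ, Finset.sum_range_one, h0, zero_add, zero_sub,
        neg_neg]
    | Nat.succ (Nat.succ m) =>
      show p.toFinsupp (m + 2) = (NUPoly.shiftX (NUPoly.shiftX Q)).toFinsupp (m + 1 + 1)
        - (NUPoly.shiftX Q).toFinsupp (m + 1 + 1)
      rw [NUPoly.shiftX_apply_succ, NUPoly.shiftX_apply_succ,
        NUPoly.shiftX_apply_succ]
      show p.toFinsupp (m + 2) = f m - f (m + 1)
      rw [hf]
      simp only
      rw [show m + 1 + 2 = (m + 2) + 1 from rfl,
        Finset.sum_range_succ (fun i => p.toFinsupp i) (m + 2)]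
      abel
  · rintro ⟨q, rfl⟩
    constructor
    · rw [NUPoly.atZero_apply, NUPoly.toFinsupp_sub, Finsupp.sub_apply,
        NUPoly.shiftX_apply_zero, NUPoly.shiftX_apply_zero, sub_zero]
    · rw [map_sub]
      simp only [NUPoly.coeffSum_shiftX]
      exact sub_self _
end
end

section
/- Let α : B → C be a surjective non-unital k-algebra homomorphism and s : C → B a k-linear map with α∘s = id_C. Then (Unitization.map α) ∘ γ_s = η_C as k-algebra homomorphisms TensorAlgebra k C → Unitization k C. Consequently, for every a ∈ J(C) = ker η_C there is a unique element ξ_s(a) ∈ ker α with γ_s(a) = inr(ξ_s(a)), and the resulting map ξ_s : J(C) → ker α is a non-unital k-algebra homomorphism — the classifying map of the k-split extension ker α → B → C, making the diagram comparing it with the universal extension J(C) → T(C) → C commute. -/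
noncomputable section

section TensorUnitization

variable (k : Type*) [CommRing k]

/-- `γ_u` : for a `k`-linear map `u : C → B` into a non-unital `k`-algebra `B`,
the unique `k`-algebra homomorphism `TensorAlgebra k C → Unitization k B` with
`γ_u (ι c) = inr (u c)`. -/
noncomputable def gammaMap {B C : Type*}
    [NonUnitalRing B] [Module k B] [SMulCommClass k B B] [IsScalarTower k B B]
    [NonUnitalRing C] [Module k C]
    (u : C →ₗ[k] B) : TensorAlgebra k C →ₐ[k] Unitization k B :=
  TensorAlgebra.lift k ((Unitization.inrHom k k B).comp u)

/-- `η_C := γ_{id C}` : the canonical `k`-algebra homomorphism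
`TensorAlgebra k C → Unitization k C`. -/
noncomputable def etaHom (C : Type*)
    [NonUnitalRing C] [Module k C] [SMulCommClass k C C] [IsScalarTower k C C] :
    TensorAlgebra k C →ₐ[k] Unitization k C :=
  gammaMap k (LinearMap.id (R := k) (M := C))

/-- `J(C) := ker η_C`, the ideal of the universal extension
`J(C) → T(C) → C`, as a non-unital subalgebra of the tensor algebra. -/
noncomputable def jIdeal (C : Type*)
    [NonUnitalRing C] [Module k C] [SMulCommClass k C C] [IsScalarTower k C C] :
    NonUnitalSubalgebra k (TensorAlgebra k C) where
  carrier := {a | etaHom k C a = 0}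
  add_mem' := fun {p q} hp hq => by
    simp only [Set.mem_setOf_eq] at *
    rw [map_add, hp, hq, add_zero]
  zero_mem' := by simp only [Set.mem_setOf_eq, map_zero]
  mul_mem' := fun {p q} hp hq => by
    simp only [Set.mem_setOf_eq] at *
    rw [map_mul, hp, zero_mul]
  smul_mem' := fun c p hp => by
    simp only [Set.mem_setOf_eq] at *
    rw [map_smul, hp, smul_zero]

/-- The kernel of a non-unital algebra homomorphism, as a non-unital
subalgebra. -/
noncomputable def nuaKer {B C : Type*}
    [NonUnitalRing B] [Module k B] [NonUnitalRing C] [Module k C]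
    (α : B →ₙₐ[k] C) : NonUnitalSubalgebra k B where
  carrier := {b | α b = 0}
  add_mem' := fun {p q} hp hq => by
    simp only [Set.mem_setOf_eq] at *
    rw [map_add, hp, hq, add_zero]
  zero_mem' := by simp only [Set.mem_setOf_eq, map_zero]
  mul_mem' := fun {p q} hp hq => by
    simp only [Set.mem_setOf_eq] at *
    rw [map_mul, hp, zero_mul]
  smul_mem' := fun c p hp => by
    simp only [Set.mem_setOf_eq] at *
    rw [map_smul, hp, smul_zero]

/-- The functorial extension of a non-unital algebra homomorphism `φ : B → C`
to unitizations, `Unitization k B → Unitization k C` (with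
`inr b ↦ inr (φ b)`). -/
noncomputable def unitizationMap {B C : Type*}
    [NonUnitalRing B] [Module k B] [SMulCommClass k B B] [IsScalarTower k B B]
    [NonUnitalRing C] [Module k C] [SMulCommClass k C C] [IsScalarTower k C C]
    (φ : B →ₙₐ[k] C) : Unitization k B →ₐ[k] Unitization k C :=
  Unitization.lift ((Unitization.inrNonUnitalAlgHom k C).comp φ)

end TensorUnitization

/-- Let `α : B → C` be a surjective non-unital `k`-algebra
homomorphism and `s : C → B` a `k`-linear map with `α ∘ s = id`.  Then
`Unitization.map α ∘ γ_s = η_C` as `k`-algebra homomorphisms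
`TensorAlgebra k C → Unitization k C`.  Consequently, for every
`a ∈ J(C) = ker η_C` there is a unique element `ξ_s a ∈ ker α` with
`γ_s a = inr (ξ_s a)`, and the resulting map `ξ_s : J(C) → ker α` is a
non-unital `k`-algebra homomorphism — the classifying map of the `k`-split
extension `ker α → B → C`, making the diagram comparing it with the universal
extension `J(C) → T(C) → C` commute. -/
theorem classifying_map_of_split_extension
    (k : Type*) [CommRing k] {B C : Type*}
    [NonUnitalRing B] [Module k B] [SMulCommClass k B B] [IsScalarTower k B B]
    [NonUnitalRing C] [Module k C] [SMulCommClass k C C] [IsScalarTower k C C]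
    (α : B →ₙₐ[k] C) (hα : Function.Surjective α)
    (s : C →ₗ[k] B) (hs : ∀ c : C, α (s c) = c) :
    (unitizationMap k α).comp (gammaMap k s) = etaHom k C ∧
    (∀ a : TensorAlgebra k C, etaHom k C a = 0 →
      ∃! x : B, α x = 0 ∧ gammaMap k s a = Unitization.inr x) ∧
    ∃ ξ : jIdeal k C →ₙₐ[k] nuaKer k α,
      ∀ a : jIdeal k C,
        (Unitization.inr ((ξ a : B)) : Unitization k B)
          = gammaMap k s (a : TensorAlgebra k C) := by

  classical
  have hlift : ∀ x : Unitization k B,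
      unitizationMap k α x = algebraMap k _ x.fst + Unitization.inr (α x.snd) := by
    intro x
    simp [unitizationMap, Unitization.lift_apply]
  have h1 : (unitizationMap k α).comp (gammaMap k s) = etaHom k C := by
    apply TensorAlgebra.hom_ext
    apply LinearMap.ext
    intro c
    show unitizationMap k α (gammaMap k s (TensorAlgebra.ι k c)) = etaHom k C (TensorAlgebra.ι k c)
    rw [gammaMap, etaHom, gammaMap, TensorAlgebra.lift_ι_apply, TensorAlgebra.lift_ι_apply]
    simp only [LinearMap.coe_comp, Function.comp_apply, Unitization.inrHom_apply,
      LinearMap.id_coe, id_eq, hlift, Unitization.fst_inr, map_zero, Unitization.snd_inr,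
      hs, zero_add]
  have key : ∀ a : TensorAlgebra k C,
      unitizationMap k α (gammaMap k s a) = etaHom k C a := fun a =>
    DFunLike.congr_fun h1 a
  have hfst : ∀ a : TensorAlgebra k C, etaHom k C a = 0 →
      (gammaMap k s a).fst = 0 := by
    intro a ha
    have := congrArg (fun x : Unitization k C => x.fst) (key a)
    rw [ha, hlift, Unitization.fst_add, Unitization.fst_inr, add_zero,
      Unitization.fst_zero] at this
    simpa [Unitization.algebraMap_eq_inl] using this
  have hsnd : ∀ a : TensorAlgebra k C, etaHom k C a = 0 →
      α (gammaMap k s a).snd = 0 := by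
    intro a ha
    have := congrArg (fun x : Unitization k C => x.snd) (key a)
    rw [ha, hlift, Unitization.snd_add, Unitization.snd_inr, Unitization.snd_zero,
      hfst a ha, map_zero, Unitization.snd_zero, zero_add] at this
    exact this
  have hγ : ∀ a : TensorAlgebra k C, etaHom k C a = 0 →
      gammaMap k s a = Unitization.inr (gammaMap k s a).snd := by
    intro a ha
    conv_lhs => rw [← Unitization.inl_fst_add_inr_snd_eq (gammaMap k s a)]
    rw [hfst a ha, Unitization.inl_zero, zero_add]
  refine ⟨h1, ?_, ?_⟩
  · intro a ha
    refine ⟨(gammaMap k s a).snd, ⟨hsnd a ha, hγ a ha⟩, ?_⟩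
    rintro x ⟨-, hx⟩
    exact Unitization.inr_injective (R := k) (hx.symm.trans (hγ a ha))
  · refine ⟨{ toFun := fun a => ⟨(gammaMap k s a).snd, hsnd a a.2⟩
              map_add' := ?madd, map_zero' := ?mzero, map_mul' := ?mmul,
              map_smul' := ?msmul }, ?_⟩
    case madd =>
      intro a b
      apply Subtype.ext
      show (gammaMap k s ((a : TensorAlgebra k C) + b)).snd
        = (gammaMap k s (a : TensorAlgebra k C)).snd + (gammaMap k s (b : TensorAlgebra k C)).snd
      rw [map_add, Unitization.snd_add]
    case mzero =>
      apply Subtype.ext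
      show (gammaMap k s ((0 : jIdeal k C) : TensorAlgebra k C)).snd = 0
      rw [ZeroMemClass.coe_zero, map_zero, Unitization.snd_zero]
    case mmul =>
      intro a b
      apply Subtype.ext
      show (gammaMap k s ((a : TensorAlgebra k C) * b)).snd
        = (gammaMap k s (a : TensorAlgebra k C)).snd * (gammaMap k s (b : TensorAlgebra k C)).snd
      apply Unitization.inr_injective (R := k)
      conv_lhs => rw [← hγ _ (mul_mem a.2 b.2), map_mul, hγ _ a.2, hγ _ b.2,
        ← Unitization.inr_mul]
    case msmul =>
      intro c a
      apply Subtype.ext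
      show (gammaMap k s (c • (a : TensorAlgebra k C))).snd
        = c • (gammaMap k s (a : TensorAlgebra k C)).snd
      rw [map_smul, Unitization.snd_smul]
    · intro a
      exact (hγ a a.2).symm
end
end

section
/- Let α : B → C and α' : B' → C' be surjective non-unital k-algebra homomorphisms with k-linear splittings β of α and β' of α', and let h : B → B', g : C → C' be non-unital k-algebra homomorphisms with α'∘h = g∘α. Let T(g) : TensorAlgebra k C → TensorAlgebra k C' be the algebra homomorphism with T(g)(ι c) = ι(g c), and let V̄ : TensorAlgebra k C → Polynomial (Unitization k B') be the unique k-algebra homomorphism with V̄(ι c) = C(inr(h(β c))) + C(inr(β'(g c) − h(β c)))·X. Then: (i) Polynomial.map (Unitization.map α') ∘ V̄ = Polynomial.C ∘ η_{C'} ∘ T(g); (ii) evaluation at X = 0 composed with V̄ equals (Unitization.map h) ∘ γ_β, and evaluation at X = 1 composed with V̄ equals γ_{β'} ∘ T(g). Consequently T(g) maps J(C) into J(C'), every coefficient of V̄(a) for a ∈ J(C) lies in inr(ker α'), and V̄ realizes an elementary homotopy between h∘ξ_β and ξ_{β'}∘J(g) : J(C) → ker α', where J(g) is the restriction of T(g)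 to J(C). -/
noncomputable section

section MyAux2

variable {k : Type*} [CommRing k]
variable {R T : Type*} [NonUnitalRing R] [Module k R] [Ring T] [Algebra k T]

def myPhiF (ψ : R →ₙₐ[k] T) (p : ℕ →₀ R) : Polynomial T :=
  p.sum fun i a => Polynomial.monomial i (ψ a)

theorem myPhiF_single (ψ : R →ₙₐ[k] T) (i : ℕ) (a : R) :
    myPhiF ψ (Finsupp.single i a) = Polynomial.monomial i (ψ a) := by
  rw [myPhiF, Finsupp.sum_single_index]
  simp

theorem coeff_myPhiF (ψ : R →ₙₐ[k] T) (p : ℕ →₀ R) (n : ℕ) :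
    (myPhiF ψ p).coeff n = ψ (p n) := by
  classical
  rw [myPhiF, Finsupp.sum, Polynomial.finset_sum_coeff]
  simp only [Polynomial.coeff_monomial]
  rw [Finset.sum_ite_eq' p.support n fun i => ψ (p i)]
  split
  · rfl
  · next h => rw [Finsupp.notMem_support_iff.mp h, map_zero]

/-- `myPhiF` as an additive monoid hom. -/
def myPhiFHom (ψ : R →ₙₐ[k] T) : (ℕ →₀ R) →+ Polynomial T where
  toFun := myPhiF ψ
  map_zero' := by
    refine Polynomial.ext fun n => ?_
    rw [coeff_myPhiF]; simp
  map_add' p q := by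
    refine Polynomial.ext fun n => ?_
    simp [coeff_myPhiF, map_add]

@[simp] theorem myPhiFHom_apply (ψ : R →ₙₐ[k] T) (p : ℕ →₀ R) :
    myPhiFHom ψ p = myPhiF ψ p := rfl

theorem myPhiF_mulF (ψ : R →ₙₐ[k] T) (p q : ℕ →₀ R) :
    myPhiF ψ (NUPolyAux.mulF p q) = myPhiF ψ p * myPhiF ψ q := by
  classical
  have h1 : myPhiF ψ (NUPolyAux.mulF p q)
      = p.sum fun i a => q.sum fun j b => Polynomial.monomial (i + j) (ψ (a * b)) := by
    rw [NUPolyAux.mulF, ← myPhiFHom_apply, map_finsuppSum]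
    refine Finsupp.sum_congr fun i _ => ?_
    rw [map_finsuppSum]
    exact Finsupp.sum_congr fun j _ => myPhiF_single ψ _ _
  rw [h1, myPhiF, myPhiF, Finsupp.sum_mul]
  refine Finsupp.sum_congr fun i _ => ?_
  rw [Finsupp.mul_sum]
  refine Finsupp.sum_congr fun j _ => ?_
  rw [Polynomial.monomial_mul_monomial, map_mul]

/-- Interpretation of an `NUPoly` via `ψ` on coefficients. -/
def myPhi (ψ : R →ₙₐ[k] T) (p : NUPoly R) : Polynomial T := myPhiF ψ p.toFinsupp

theorem coeff_myPhi (ψ : R →ₙₐ[k] T) (p : NUPoly R) (n : ℕ) :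
    (myPhi ψ p).coeff n = ψ (p.toFinsupp n) := coeff_myPhiF ψ _ n

theorem myPhi_add (ψ : R →ₙₐ[k] T) (p q : NUPoly R) :
    myPhi ψ (p + q) = myPhi ψ p + myPhi ψ q := by
  refine Polynomial.ext fun n => ?_
  simp [coeff_myPhi, NUPoly.toFinsupp_add]

theorem myPhi_zero (ψ : R →ₙₐ[k] T) : myPhi ψ (0 : NUPoly R) = 0 := by
  refine Polynomial.ext fun n => ?_
  simp [coeff_myPhi]

theorem myPhi_mul (ψ : R →ₙₐ[k] T) (p q : NUPoly R) :
    myPhi ψ (p * q) = myPhi ψ p * myPhi ψ q := by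
  rw [myPhi, NUPoly.toFinsupp_mul, myPhiF_mulF]; rfl

theorem myPhi_smul (ψ : R →ₙₐ[k] T) (c : k) (p : NUPoly R) :
    myPhi ψ (c • p) = c • myPhi ψ p := by
  refine Polynomial.ext fun n => ?_
  rw [coeff_myPhi, Polynomial.coeff_smul, coeff_myPhi, NUPoly.toFinsupp_smul,
    Finsupp.smul_apply, map_smul]

theorem myPhi_injective (ψ : R →ₙₐ[k] T) (hψ : Function.Injective ψ) :
    Function.Injective (myPhi ψ) := by
  intro p q hpq
  apply NUPoly.toFinsupp_injective
  ext n
  apply hψ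
  rw [← coeff_myPhi, ← coeff_myPhi, hpq]

end MyAux2

set_option maxHeartbeats 1600000 in
/-- Let `α : B → C` and `α' : B' → C'` be surjective
non-unital `k`-algebra homomorphisms with `k`-linear splittings `β` of `α` and
`β'` of `α'`, and let `h : B → B'`, `g : C → C'` be non-unital `k`-algebra
homomorphisms with `α' ∘ h = g ∘ α`.  Let
`T(g) : TensorAlgebra k C → TensorAlgebra k C'` be the algebra homomorphism
with `T(g) (ι c) = ι (g c)`, and let
`V̄ : TensorAlgebra k C → Polynomial (Unitization k B')` be the unique
`k`-algebra homomorphism with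
`V̄ (ι c) = C (inr (h (β c))) + C (inr (β' (g c) - h (β c))) · X`.  Then:
(i) `Polynomial.map (Unitization.map α') ∘ V̄ = Polynomial.C ∘ η_{C'} ∘ T(g)`;
(ii) evaluation at `X = 0` composed with `V̄` equals `Unitization.map h ∘ γ_β`,
and evaluation at `X = 1` composed with `V̄` equals `γ_{β'} ∘ T(g)`.
Consequently `T(g)` maps `J(C)` into `J(C')`, every coefficient of `V̄ a` for
`a ∈ J(C)` lies in `inr (ker α')`, and `V̄` realizes an elementary homotopy
between `h ∘ ξ_β` and `ξ_{β'} ∘ J(g) : J(C) → ker α'`, where `J(g)` is the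
restriction of `T(g)` to `J(C)`. -/
theorem classifying_maps_commute_up_to_elementary_homotopy
    (k : Type*) [CommRing k] {B C B' C' : Type*}
    [NonUnitalRing B] [Module k B] [SMulCommClass k B B] [IsScalarTower k B B]
    [NonUnitalRing C] [Module k C] [SMulCommClass k C C] [IsScalarTower k C C]
    [NonUnitalRing B'] [Module k B'] [SMulCommClass k B' B'] [IsScalarTower k B' B']
    [NonUnitalRing C'] [Module k C'] [SMulCommClass k C' C'] [IsScalarTower k C' C']
    (α : B →ₙₐ[k] C) (hα : Function.Surjective α)
    (α' : B' →ₙₐ[k] C') (hα' : Function.Surjective α')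
    (β : C →ₗ[k] B) (hβ : ∀ c : C, α (β c) = c)
    (β' : C' →ₗ[k] B') (hβ' : ∀ c : C', α' (β' c) = c)
    (h : B →ₙₐ[k] B') (g : C →ₙₐ[k] C') (hcomm : α'.comp h = g.comp α)
    -- `T(g)`, characterized by its values on the generators
    (Tg : TensorAlgebra k C →ₐ[k] TensorAlgebra k C')
    (hTg : ∀ c : C, Tg (TensorAlgebra.ι k c) = TensorAlgebra.ι k (g c))
    -- the classifying maps `ξ_β : J(C) → ker α` and `ξ_{β'} : J(C') → ker α'`
    (ξβ : jIdeal k C →ₙₐ[k] nuaKer k α)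
    (hξβ : ∀ a : jIdeal k C,
      (Unitization.inr ((ξβ a : B)) : Unitization k B)
        = gammaMap k β (a : TensorAlgebra k C))
    (ξβ' : jIdeal k C' →ₙₐ[k] nuaKer k α')
    (hξβ' : ∀ a : jIdeal k C',
      (Unitization.inr ((ξβ' a : B')) : Unitization k B')
        = gammaMap k β' (a : TensorAlgebra k C'))
    -- `J(g)`, the restriction of `T(g)` to `J(C)`
    (Jg : jIdeal k C →ₙₐ[k] jIdeal k C')
    (hJg : ∀ a : jIdeal k C, (Jg a : TensorAlgebra k C') = Tg (a : TensorAlgebra k C))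
    -- the restriction of `h` to a map `ker α → ker α'`
    (hker : nuaKer k α →ₙₐ[k] nuaKer k α')
    (hhker : ∀ x : nuaKer k α, (hker x : B') = h (x : B)) :
    -- existence and uniqueness of `V̄`
    (∃! V : TensorAlgebra k C →ₐ[k] Polynomial (Unitization k B'),
      ∀ c : C, V (TensorAlgebra.ι k c)
        = Polynomial.C (Unitization.inr (h (β c)))
          + Polynomial.C (Unitization.inr (β' (g c) - h (β c))) * Polynomial.X) ∧
    -- and its properties:
    ∀ Vbar : TensorAlgebra k C →ₐ[k] Polynomial (Unitization k B'),
      (∀ c : C, Vbar (TensorAlgebra.ι k c)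
        = Polynomial.C (Unitization.inr (h (β c)))
          + Polynomial.C (Unitization.inr (β' (g c) - h (β c))) * Polynomial.X) →
      -- (i)
      (∀ a : TensorAlgebra k C,
        Polynomial.map (unitizationMap k α').toRingHom (Vbar a)
          = Polynomial.C (etaHom k C' (Tg a))) ∧
      -- (ii)
      (∀ a : TensorAlgebra k C,
        (Vbar a).coeff 0 = unitizationMap k h (gammaMap k β a)) ∧
      (∀ a : TensorAlgebra k C, (Vbar a).eval 1 = gammaMap k β' (Tg a)) ∧
      -- `T(g)` maps `J(C)` into `J(C')`
      (∀ a : TensorAlgebra k C, etaHom k C a = 0 → etaHom k C' (Tg a) = 0) ∧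
      -- the coefficients of `V̄ a` lie in `inr (ker α')` for `a ∈ J(C)`
      (∀ a : TensorAlgebra k C, etaHom k C a = 0 → ∀ i : ℕ,
        ∃ x : B', α' x = 0 ∧ (Vbar a).coeff i = Unitization.inr x) ∧
      -- `V̄` realizes an elementary homotopy between `h ∘ ξ_β` and `ξ_{β'} ∘ J(g)`
      ∃ H : jIdeal k C →ₙₐ[k] NUPoly (nuaKer k α'),
        (∀ (a : jIdeal k C) (i : ℕ),
          (Unitization.inr (((H a).toFinsupp i : nuaKer k α') : B') : Unitization k B')
            = (Vbar (a : TensorAlgebra k C)).coeff i) ∧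
        (NUPoly.atZero k (nuaKer k α')).comp H = hker.comp ξβ ∧
        (NUPoly.coeffSum k (nuaKer k α')).comp H = ξβ'.comp Jg := by
  classical
  have hgα : ∀ b : B, α' (h b) = g (α b) := fun b => DFunLike.congr_fun hcomm b
  have humα' : ∀ x : B', unitizationMap k α' (Unitization.inr x) = Unitization.inr (α' x) :=
    fun x => by simp [unitizationMap]
  have humh : ∀ x : B, unitizationMap k h (Unitization.inr x) = Unitization.inr (h x) :=
    fun x => by simp [unitizationMap]
  have humg : ∀ x : C, unitizationMap k g (Unitization.inr x) = Unitization.inr (g x) :=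
    fun x => by simp [unitizationMap]
  have hgmβ : ∀ c : C, gammaMap k β (TensorAlgebra.ι k c) = Unitization.inr (β c) :=
    fun c => by simp [gammaMap]
  have hgmβ' : ∀ c : C', gammaMap k β' (TensorAlgebra.ι k c) = Unitization.inr (β' c) :=
    fun c => by simp [gammaMap]
  have hetaC : ∀ c : C, etaHom k C (TensorAlgebra.ι k c) = Unitization.inr c :=
    fun c => by simp [etaHom, gammaMap]
  have hetaC' : ∀ c : C', etaHom k C' (TensorAlgebra.ι k c) = Unitization.inr c :=
    fun c => by simp [etaHom, gammaMap]
  let u : C →ₗ[k] Polynomial (Unitization k B') :=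
    { toFun := fun c => Polynomial.C (Unitization.inr (h (β c)))
        + Polynomial.C (Unitization.inr (β' (g c) - h (β c))) * Polynomial.X
      map_add' := fun x y => by
        simp only [map_add, add_sub_add_comm, Unitization.inr_add, add_mul]
        abel
      map_smul' := fun c x => by
        simp only [map_smul, ← smul_sub, Unitization.inr_smul, ← Polynomial.smul_C,
          RingHom.id_apply, smul_add, smul_mul_assoc] }
  have hVex : ∀ c : C, (TensorAlgebra.lift k u) (TensorAlgebra.ι k c)
      = Polynomial.C (Unitization.inr (h (β c)))
        + Polynomial.C (Unitization.inr (β' (g c) - h (β c))) * Polynomial.X := fun c => by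
    rw [TensorAlgebra.lift_ι_apply]; rfl
  refine ⟨⟨TensorAlgebra.lift k u, hVex, fun W hW => ?_⟩, fun Vbar hV => ?_⟩
  · refine TensorAlgebra.hom_ext (LinearMap.ext fun c => ?_)
    simp only [LinearMap.coe_comp, Function.comp_apply, AlgHom.toLinearMap_apply]
    rw [hW c, hVex c]
  -- properties of Vbar
  have hi : (Polynomial.mapAlgHom (unitizationMap k α')).comp Vbar
      = Polynomial.CAlgHom.comp ((etaHom k C').comp Tg) := by
    refine TensorAlgebra.hom_ext (LinearMap.ext fun c => ?_)
    simp only [LinearMap.coe_comp, Function.comp_apply, AlgHom.toLinearMap_apply,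
      AlgHom.coe_comp]
    rw [hV c]
    have h2 : α' (β' (g c) - h (β c)) = 0 := by
      rw [map_sub, hβ', hgα, hβ c, sub_self]
    simp [Polynomial.CAlgHom, hTg, hetaC', humα', h2, hgα, hβ c, hβ', Polynomial.map_add]
  have hi' : ∀ a : TensorAlgebra k C,
      Polynomial.map (unitizationMap k α').toRingHom (Vbar a)
        = Polynomial.C (etaHom k C' (Tg a)) := fun a => by
    have := DFunLike.congr_fun hi a
    simpa using this
  -- eval at 0 and 1 as algebra homs
  let e0 : Polynomial (Unitization k B') →ₐ[k] Unitization k B' :=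
    Polynomial.eval₂AlgHom (AlgHom.id k _) 0 fun a => Commute.zero_right _
  have he0 : ∀ p : Polynomial (Unitization k B'), e0 p = p.coeff 0 := fun p => by
    simp [e0, Polynomial.eval₂_at_zero]
  let e1 : Polynomial (Unitization k B') →ₐ[k] Unitization k B' :=
    Polynomial.eval₂AlgHom (AlgHom.id k _) 1 fun a => Commute.one_right _
  have he1 : ∀ p : Polynomial (Unitization k B'), e1 p = p.eval 1 := fun p => rfl
  have h0 : e0.comp Vbar = (unitizationMap k h).comp (gammaMap k β) := by
    refine TensorAlgebra.hom_ext (LinearMap.ext fun c => ?_)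
    simp only [LinearMap.coe_comp, Function.comp_apply, AlgHom.toLinearMap_apply,
      AlgHom.comp_apply]
    rw [hV c, he0, hgmβ, humh]
    simp
  have hii0 : ∀ a : TensorAlgebra k C,
      (Vbar a).coeff 0 = unitizationMap k h (gammaMap k β a) := fun a => by
    have := DFunLike.congr_fun h0 a
    simp only [AlgHom.comp_apply] at this
    rw [← this, he0]
  have h1 : e1.comp Vbar = (gammaMap k β').comp Tg := by
    refine TensorAlgebra.hom_ext (LinearMap.ext fun c => ?_)
    simp only [LinearMap.coe_comp, Function.comp_apply, AlgHom.toLinearMap_apply,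
      AlgHom.comp_apply]
    rw [hV c, he1, hTg, hgmβ']
    simp [← Unitization.inr_add]
  have hii1 : ∀ a : TensorAlgebra k C,
      (Vbar a).eval 1 = gammaMap k β' (Tg a) := fun a => by
    have := DFunLike.congr_fun h1 a
    simp only [AlgHom.comp_apply] at this
    rw [← this, he1]
  have hJcomm : (etaHom k C').comp Tg = (unitizationMap k g).comp (etaHom k C) := by
    refine TensorAlgebra.hom_ext (LinearMap.ext fun c => ?_)
    simp only [LinearMap.coe_comp, Function.comp_apply, AlgHom.toLinearMap_apply,
      AlgHom.comp_apply]
    rw [hTg, hetaC', hetaC, humg]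
  have hJ : ∀ a : TensorAlgebra k C, etaHom k C a = 0 → etaHom k C' (Tg a) = 0 := by
    intro a ha
    have := DFunLike.congr_fun hJcomm a
    simp only [AlgHom.comp_apply] at this
    rw [this, ha, map_zero]
  have hfstcomm : (Polynomial.mapAlgHom (Unitization.fstHom k B')).comp Vbar
      = Polynomial.CAlgHom.comp ((Unitization.fstHom k C).comp (etaHom k C)) := by
    refine TensorAlgebra.hom_ext (LinearMap.ext fun c => ?_)
    simp only [LinearMap.coe_comp, Function.comp_apply, AlgHom.toLinearMap_apply,
      AlgHom.comp_apply]
    rw [hV c, hetaC]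
    simp [Polynomial.CAlgHom, Polynomial.map_add]
  have hcoeffs : ∀ a : TensorAlgebra k C, etaHom k C a = 0 → ∀ i : ℕ,
      ∃ x : B', α' x = 0 ∧ (Vbar a).coeff i = Unitization.inr x := by
    intro a ha i
    have hfst : ((Vbar a).coeff i).fst = 0 := by
      have hm := DFunLike.congr_fun hfstcomm a
      simp only [AlgHom.comp_apply, Polynomial.coe_mapAlgHom] at hm
      rw [ha, map_zero, map_zero] at hm
      have := congrArg (fun p => Polynomial.coeff p i) hm
      simpa [Polynomial.coeff_map] using this
    have hinr : (Vbar a).coeff i = Unitization.inr ((Vbar a).coeff i).snd := by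
      rw [← Unitization.inl_fst_add_inr_snd_eq ((Vbar a).coeff i), hfst]
      simp
    refine ⟨((Vbar a).coeff i).snd, ?_, hinr⟩
    have h4 : unitizationMap k α' ((Vbar a).coeff i) = 0 := by
      have h5 : (Polynomial.map (unitizationMap k α').toRingHom (Vbar a)).coeff i
          = (Polynomial.C (etaHom k C' (Tg a))).coeff i := by rw [hi' a]
      rw [Polynomial.coeff_map, hJ a ha, map_zero, Polynomial.coeff_zero] at h5
      exact h5
    apply Unitization.inr_injective (R := k)
    rw [← humα', ← hinr, h4, Unitization.inr_zero]
  refine ⟨hi', hii0, hii1, hJ, hcoeffs, ?_⟩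
  -- the homotopy H
  let ψ : nuaKer k α' →ₙₐ[k] Unitization k B' :=
    (Unitization.inrNonUnitalAlgHom k B').comp (NonUnitalSubalgebraClass.subtype (nuaKer k α'))
  have hψ : ∀ x : nuaKer k α', ψ x = Unitization.inr (x : B') := fun x => rfl
  have hψinj : Function.Injective ψ := fun x y hxy =>
    Subtype.ext (Unitization.inr_injective (R := k) hxy)
  have hmem : ∀ (a : jIdeal k C) (i : ℕ),
      α' (((Vbar (a : TensorAlgebra k C)).coeff i).snd) = 0 ∧
      (Vbar (a : TensorAlgebra k C)).coeff i
        = Unitization.inr ((Vbar (a : TensorAlgebra k C)).coeff i).snd := by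
    intro a i
    obtain ⟨x, hx1, hx2⟩ := hcoeffs a a.2 i
    constructor
    · rw [hx2, Unitization.snd_inr]; exact hx1
    · conv_lhs => rw [hx2]
      rw [hx2, Unitization.snd_inr]
  let Hfun : jIdeal k C → NUPoly (nuaKer k α') := fun a =>
    ⟨Finsupp.onFinset (Vbar (a : TensorAlgebra k C)).support
      (fun i => ⟨((Vbar (a : TensorAlgebra k C)).coeff i).snd, (hmem a i).1⟩)
      (fun i hi => by
        rw [Polynomial.mem_support_iff]
        intro hc
        exact hi (Subtype.ext (by simp [hc])))⟩
  have hHcoeff : ∀ (a : jIdeal k C) (i : ℕ),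
      (Unitization.inr (((Hfun a).toFinsupp i : nuaKer k α') : B') : Unitization k B')
        = (Vbar (a : TensorAlgebra k C)).coeff i := fun a i =>
    ((hmem a i).2).symm
  have hPhiH : ∀ a : jIdeal k C, myPhi ψ (Hfun a) = Vbar (a : TensorAlgebra k C) := fun a => by
    refine Polynomial.ext fun n => ?_
    rw [coeff_myPhi, hψ, hHcoeff]
  let H : jIdeal k C →ₙₐ[k] NUPoly (nuaKer k α') :=
    { toFun := Hfun
      map_add' := fun a b => myPhi_injective ψ hψinj <| by
        rw [myPhi_add, hPhiH, hPhiH, hPhiH]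
        exact map_add Vbar (a : TensorAlgebra k C) (b : TensorAlgebra k C)
      map_smul' := fun c a => myPhi_injective ψ hψinj <| by
        rw [myPhi_smul, hPhiH, hPhiH]
        exact map_smul Vbar c (a : TensorAlgebra k C)
      map_zero' := myPhi_injective ψ hψinj <| by
        rw [myPhi_zero, hPhiH]
        simp
      map_mul' := fun a b => myPhi_injective ψ hψinj <| by
        rw [myPhi_mul, hPhiH, hPhiH, hPhiH]
        exact map_mul Vbar (a : TensorAlgebra k C) (b : TensorAlgebra k C) }
  have hHcoeff' : ∀ (a : jIdeal k C) (i : ℕ),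
      (Unitization.inr (((H a).toFinsupp i : nuaKer k α') : B') : Unitization k B')
        = (Vbar (a : TensorAlgebra k C)).coeff i := fun a i => hHcoeff a i
  refine ⟨H, hHcoeff', ?_, ?_⟩
  · refine NonUnitalAlgHom.ext fun a => ?_
    simp only [NonUnitalAlgHom.comp_apply]
    refine Subtype.ext (Unitization.inr_injective (R := k) ?_)
    show (Unitization.inr (((NUPoly.atZero k (nuaKer k α')) (H a) : nuaKer k α') : B')
        : Unitization k B') = Unitization.inr ((hker (ξβ a) : nuaKer k α') : B')
    rw [NUPoly.atZero_apply, hHcoeff' a 0, hii0, ← hξβ a, humh, hhker]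
  · refine NonUnitalAlgHom.ext fun a => ?_
    simp only [NonUnitalAlgHom.comp_apply]
    refine Subtype.ext (Unitization.inr_injective (R := k) ?_)
    show (Unitization.inr (((NUPoly.coeffSum k (nuaKer k α')) (H a) : nuaKer k α') : B')
        : Unitization k B') = Unitization.inr ((ξβ' (Jg a) : nuaKer k α') : B')
    have hsupp : (H a).toFinsupp.support ⊆ (Vbar (a : TensorAlgebra k C)).support := by
      intro i hi
      rw [Finsupp.mem_support_iff] at hi
      rw [Polynomial.mem_support_iff]
      intro hc
      apply hi
      apply hψinj
      rw [hψ, hHcoeff' a i, hc, map_zero]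
    calc (Unitization.inr (((NUPoly.coeffSum k (nuaKer k α')) (H a) : nuaKer k α') : B')
          : Unitization k B')
        = ψ ((H a).toFinsupp.sum fun _ x => x) := rfl
      _ = (H a).toFinsupp.sum fun _ x => ψ x := map_finsuppSum ψ _ _
      _ = ∑ i ∈ (Vbar (a : TensorAlgebra k C)).support, ψ ((H a).toFinsupp i) :=
          Finsupp.sum_of_support_subset _ hsupp _ (fun i _ => map_zero ψ)
      _ = ∑ i ∈ (Vbar (a : TensorAlgebra k C)).support,
            (Vbar (a : TensorAlgebra k C)).coeff i :=
          Finset.sum_congr rfl fun i _ => by rw [hψ, hHcoeff']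
      _ = (Vbar (a : TensorAlgebra k C)).eval 1 := by
          rw [Polynomial.eval_eq_sum, Polynomial.sum]
          exact (Finset.sum_congr rfl fun i _ => by rw [one_pow, mul_one]).symm
      _ = gammaMap k β' (Tg (a : TensorAlgebra k C)) := hii1 _
      _ = gammaMap k β' ((Jg a : jIdeal k C') : TensorAlgebra k C') := by rw [hJg]
      _ = Unitization.inr ((ξβ' (Jg a) : nuaKer k α') : B') := (hξβ' (Jg a)).symm
end
end

section
/- Let f, g : A' → A be non-unital k-algebra homomorphisms that are elementary homotopic via a homomorphism h : A' → A[x]. Let T(f), T(g) : TensorAlgebra k A' → TensorAlgebra k A and T(h) : TensorAlgebra k A' → TensorAlgebra k (A[x]) be the induced algebra homomorphisms (determined by ι a ↦ ι(f a), ι(g a), ι(h a) respectively), and let Θ : TensorAlgebra k (A[x]) → Polynomial (TensorAlgebra k A) be the unique k-algebra homomorphism whose composite with ι sends a polynomial Σ aᵢ xⁱ to Σ C(ι aᵢ)·Xⁱ. Set H := Θ ∘ T(h). Then evaluation at X = 0 composed with H equals T(f), evaluation at X = 1 composed with H equals T(g), and for every a ∈ J(A') = ker η_{A'} all coefficients of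 H(a) lie in J(A) = ker η_A. Hence the induced maps J(f), J(g) : J(A') → J(A) (restrictions of T(f), T(g)) are elementary homotopic: the functor J preserves polynomial homotopy. -/
noncomputable section

namespace JPrfAux

open Polynomial

variable (k : Type*) [CommRing k]

theorem unit_lift_inr {B C : Type*} [NonUnitalRing B] [Module k B]
    [SMulCommClass k B B] [IsScalarTower k B B] [Ring C] [Algebra k C]
    (φ : B →ₙₐ[k] C) (b : B) :
    Unitization.lift φ (Unitization.inr b) = φ b := by
  simp

-- coercion of NUPoly over a subalgebra into Polynomial
variable {T : Type*} [Ring T] [Algebra k T] (S : NonUnitalSubalgebra k T)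

def coeNUP (p : NUPoly S) : Polynomial T :=
  p.toFinsupp.sum fun i a => Polynomial.monomial i (a : T)

theorem coeff_coeNUP (p : NUPoly S) (n : ℕ) :
    (coeNUP k S p).coeff n = (p.toFinsupp n : T) := by
  classical
  rw [coeNUP, Finsupp.sum, Polynomial.finset_sum_coeff]
  simp only [Polynomial.coeff_monomial]
  rw [Finset.sum_ite_eq' p.toFinsupp.support n fun i => ((p.toFinsupp i : T))]
  split
  · rfl
  · next h => rw [Finsupp.notMem_support_iff.mp h, ZeroMemClass.coe_zero]

theorem coeNUP_injective : Function.Injective (coeNUP k S) := by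
  intro p q h
  apply NUPoly.toFinsupp_injective
  ext n
  have := congrArg (fun r => Polynomial.coeff r n) h
  simp only [coeff_coeNUP] at this
  exact this

theorem coeNUP_add (p q : NUPoly S) :
    coeNUP k S (p + q) = coeNUP k S p + coeNUP k S q := by
  refine Polynomial.ext fun n => ?_
  simp [coeff_coeNUP]

theorem coeNUP_smul (c : k) (p : NUPoly S) :
    coeNUP k S (c • p) = c • coeNUP k S p := by
  refine Polynomial.ext fun n => ?_
  simp [coeff_coeNUP, Polynomial.coeff_smul]

theorem coeNUP_mul (p q : NUPoly S) :
    coeNUP k S (p * q) = coeNUP k S p * coeNUP k S q := by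
  refine Polynomial.ext fun n => ?_
  rw [coeff_coeNUP, Polynomial.coeff_mul, NUPoly.mul_apply]
  push_cast
  exact Finset.sum_congr rfl fun x _ => by rw [coeff_coeNUP, coeff_coeNUP]

end JPrfAux

namespace JPrfAux

open Polynomial

variable (k : Type*) [CommRing k]
variable {T : Type*} [Ring T] [Algebra k T] (S : NonUnitalSubalgebra k T)

theorem coe_coeffSum (p : NUPoly S) :
    ((NUPoly.coeffSum k S p : S) : T) = (coeNUP k S p).eval 1 := by
  rw [NUPoly.coeffSum_apply, coeNUP, Finsupp.sum, Finsupp.sum,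
    Polynomial.eval_finset_sum]
  rw [AddSubmonoidClass.coe_finset_sum]
  exact Finset.sum_congr rfl fun i _ => by rw [Polynomial.eval_monomial, one_pow, mul_one]

end JPrfAux
namespace JPrfAux2

open Polynomial

variable (k : Type*) [CommRing k]
variable {A : Type*} [NonUnitalRing A] [Module k A] [SMulCommClass k A A] [IsScalarTower k A A]

theorem etaHom_ι (a : A) :
    etaHom k A (TensorAlgebra.ι k a) = Unitization.inr a := by
  rw [etaHom, gammaMap, TensorAlgebra.lift_ι_apply]
  rfl

/-- `p ↦ Σ inr(aᵢ) Xⁱ` as a map into polynomials over the unitization. -/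
def toPUk (p : NUPoly A) : Polynomial (Unitization k A) :=
  p.toFinsupp.sum fun i a => Polynomial.monomial i (Unitization.inr a)

theorem coeff_toPUk (p : NUPoly A) (n : ℕ) :
    (toPUk k p).coeff n = Unitization.inr (p.toFinsupp n) := by
  classical
  rw [toPUk, Finsupp.sum, Polynomial.finset_sum_coeff]
  simp only [Polynomial.coeff_monomial]
  rw [Finset.sum_ite_eq' p.toFinsupp.support n
    fun i => (Unitization.inr (p.toFinsupp i) : Unitization k A)]
  split
  · rfl
  · next h => rw [Finsupp.notMem_support_iff.mp h, Unitization.inr_zero]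

/-- `toPUk` as a non-unital algebra homomorphism. -/
def toPUkHom : NUPoly A →ₙₐ[k] Polynomial (Unitization k A) where
  toFun := toPUk k
  map_add' p q := Polynomial.ext fun n => by
    simp [coeff_toPUk]
  map_smul' c p := Polynomial.ext fun n => by
    simp [coeff_toPUk, Polynomial.coeff_smul, Unitization.inr_smul]
  map_zero' := Polynomial.ext fun n => by simp [coeff_toPUk]
  map_mul' p q := Polynomial.ext fun n => by
    rw [coeff_toPUk, Polynomial.coeff_mul, NUPoly.mul_apply]
    have h1 : (Unitization.inr (∑ x ∈ Finset.HasAntidiagonal.antidiagonal n,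
          p.toFinsupp x.1 * q.toFinsupp x.2) : Unitization k A)
        = ∑ x ∈ Finset.HasAntidiagonal.antidiagonal n,
            (Unitization.inr (p.toFinsupp x.1 * q.toFinsupp x.2) : Unitization k A) :=
      map_sum (Unitization.inrHom k k A) _ (Finset.HasAntidiagonal.antidiagonal n)
    rw [h1]
    exact Finset.sum_congr rfl fun x _ => by
      rw [Unitization.inr_mul, coeff_toPUk, coeff_toPUk]

@[simp] theorem toPUkHom_apply (p : NUPoly A) : toPUkHom k p = toPUk k p := rfl

/-- Constant coefficient as an algebra homomorphism. -/
def constCoeffAlgHom (T : Type*) [Ring T] [Algebra k T] :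
    Polynomial T →ₐ[k] T :=
  { Polynomial.constantCoeff with
    commutes' := fun c => by
      simp [Polynomial.algebraMap_apply] }

@[simp] theorem constCoeffAlgHom_apply (T : Type*) [Ring T] [Algebra k T] (p : Polynomial T) :
    constCoeffAlgHom k T p = p.coeff 0 := rfl

/-- Evaluation at `1` as a `k`-algebra homomorphism. -/
def evalOneAlgHom (T : Type*) [Ring T] [Algebra k T] :
    Polynomial T →ₐ[k] T :=
  Polynomial.eval₂AlgHom (AlgHom.id k T) 1 (fun _ => Commute.one_right _)

theorem evalOneAlgHom_apply (T : Type*) [Ring T] [Algebra k T] (p : Polynomial T) :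
    evalOneAlgHom k T p = p.eval 1 := by
  rw [evalOneAlgHom, Polynomial.eval₂AlgHom_apply]
  rfl

end JPrfAux2

namespace JPrfAux2

open Polynomial

theorem coeff_sumCXpow {R T : Type*} [Zero R] [Ring T] (v : ℕ →₀ R) (u : R → T)
    (hu : u 0 = 0) (n : ℕ) :
    (v.sum fun i r => Polynomial.C (u r) * Polynomial.X ^ i).coeff n = u (v n) := by
  classical
  simp_rw [Polynomial.C_mul_X_pow_eq_monomial]
  rw [Finsupp.sum, Polynomial.finset_sum_coeff]
  simp only [Polynomial.coeff_monomial]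
  rw [Finset.sum_ite_eq' v.support n fun i => u (v i)]
  split
  · rfl
  · next h => rw [Finsupp.notMem_support_iff.mp h, hu]

theorem evalOne_sumCXpow {R T : Type*} [Zero R] [Ring T] (v : ℕ →₀ R) (u : R → T) :
    (v.sum fun i r => Polynomial.C (u r) * Polynomial.X ^ i).eval 1
      = v.sum fun _ r => u r := by
  simp_rw [Polynomial.C_mul_X_pow_eq_monomial]
  rw [Finsupp.sum, Finsupp.sum, Polynomial.eval_finset_sum]
  exact Finset.sum_congr rfl fun i _ => by rw [Polynomial.eval_monomial, one_pow, mul_one]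

end JPrfAux2
set_option maxHeartbeats 1000000 in
/-- Let `f, g : A' → A` be non-unital `k`-algebra
homomorphisms that are elementary homotopic via a homomorphism `h : A' → A[x]`.
Let `T(f), T(g) : TensorAlgebra k A' → TensorAlgebra k A` and
`T(h) : TensorAlgebra k A' → TensorAlgebra k (A[x])` be the induced algebra
homomorphisms, and let `Θ : TensorAlgebra k (A[x]) → Polynomial (TensorAlgebra k A)`
be the unique `k`-algebra homomorphism whose composite with `ι` sends
`Σ aᵢ xⁱ` to `Σ C (ι aᵢ) · Xⁱ`.  Set `H := Θ ∘ T(h)`.  Then evaluation at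
`X = 0` composed with `H` equals `T(f)`, evaluation at `X = 1` composed with
`H` equals `T(g)`, and for every `a ∈ J(A') = ker η_{A'}` all coefficients of
`H a` lie in `J(A) = ker η_A`.  Hence the induced maps
`J(f), J(g) : J(A') → J(A)` (restrictions of `T(f), T(g)`) are elementary
homotopic: the functor `J` preserves polynomial homotopy. -/
theorem jFunctor_preserves_homotopy
    (k : Type*) [CommRing k] {A' A : Type*}
    [NonUnitalRing A'] [Module k A'] [SMulCommClass k A' A'] [IsScalarTower k A' A']
    [NonUnitalRing A] [Module k A] [SMulCommClass k A A] [IsScalarTower k A A]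
    (f g : A' →ₙₐ[k] A) (h : A' →ₙₐ[k] NUPoly A)
    (hf : (NUPoly.atZero k A).comp h = f) (hg : (NUPoly.coeffSum k A).comp h = g)
    -- the induced maps on tensor algebras, characterized on generators
    (Tf Tg : TensorAlgebra k A' →ₐ[k] TensorAlgebra k A)
    (hTf : ∀ a : A', Tf (TensorAlgebra.ι k a) = TensorAlgebra.ι k (f a))
    (hTg : ∀ a : A', Tg (TensorAlgebra.ι k a) = TensorAlgebra.ι k (g a))
    (Th : TensorAlgebra k A' →ₐ[k] TensorAlgebra k (NUPoly A))
    (hTh : ∀ a : A', Th (TensorAlgebra.ι k a) = TensorAlgebra.ι k (h a))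
    -- `Θ`, characterized on generators
    (Θ : TensorAlgebra k (NUPoly A) →ₐ[k] Polynomial (TensorAlgebra k A))
    (hΘ : ∀ p : NUPoly A,
      Θ (TensorAlgebra.ι k p)
        = p.toFinsupp.sum fun i r =>
            Polynomial.C (TensorAlgebra.ι k r) * Polynomial.X ^ i) :
    -- `Θ` exists and is unique
    (∃! Θ' : TensorAlgebra k (NUPoly A) →ₐ[k] Polynomial (TensorAlgebra k A),
      ∀ p : NUPoly A,
        Θ' (TensorAlgebra.ι k p)
          = p.toFinsupp.sum fun i r =>
              Polynomial.C (TensorAlgebra.ι k r) * Polynomial.X ^ i) ∧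
    -- evaluation at `X = 0` composed with `H = Θ ∘ T(h)` equals `T(f)`
    (∀ a : TensorAlgebra k A', ((Θ.comp Th) a).coeff 0 = Tf a) ∧
    -- evaluation at `X = 1` composed with `H` equals `T(g)`
    (∀ a : TensorAlgebra k A', ((Θ.comp Th) a).eval 1 = Tg a) ∧
    -- for `a ∈ J(A')`, all coefficients of `H a` lie in `J(A)`
    (∀ a : TensorAlgebra k A', etaHom k A' a = 0 →
      ∀ i : ℕ, etaHom k A (((Θ.comp Th) a).coeff i) = 0) ∧
    -- hence `J(f)` and `J(g)` are elementary homotopic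
    (∀ (Jf Jg : jIdeal k A' →ₙₐ[k] jIdeal k A),
      (∀ a : jIdeal k A', (Jf a : TensorAlgebra k A) = Tf (a : TensorAlgebra k A')) →
      (∀ a : jIdeal k A', (Jg a : TensorAlgebra k A) = Tg (a : TensorAlgebra k A')) →
      ElemHomotopic k Jf Jg) := by
  classical
  -- abbreviations
  have hι : ∀ a : A', Θ (Th (TensorAlgebra.ι k a))
      = (h a).toFinsupp.sum fun i r =>
          Polynomial.C (TensorAlgebra.ι k r) * Polynomial.X ^ i := fun a => by
    rw [hTh, hΘ]
  -- Part 2 : coeff 0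
  have e2 : (JPrfAux2.constCoeffAlgHom k (TensorAlgebra k A)).comp (Θ.comp Th) = Tf := by
    refine TensorAlgebra.hom_ext (LinearMap.ext fun a => ?_)
    show JPrfAux2.constCoeffAlgHom k _ (Θ (Th (TensorAlgebra.ι k a)))
      = Tf (TensorAlgebra.ι k a)
    rw [hι, JPrfAux2.constCoeffAlgHom_apply, JPrfAux2.coeff_sumCXpow _ _ (map_zero _), hTf]
    have hfa : (h a).toFinsupp 0 = f a := DFunLike.congr_fun hf a
    rw [hfa]
  have part2 : ∀ a : TensorAlgebra k A', ((Θ.comp Th) a).coeff 0 = Tf a :=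
    fun a => DFunLike.congr_fun e2 a
  -- Part 3 : eval at 1
  have e3 : (JPrfAux2.evalOneAlgHom k (TensorAlgebra k A)).comp (Θ.comp Th) = Tg := by
    refine TensorAlgebra.hom_ext (LinearMap.ext fun a => ?_)
    show JPrfAux2.evalOneAlgHom k _ (Θ (Th (TensorAlgebra.ι k a)))
      = Tg (TensorAlgebra.ι k a)
    rw [hι, JPrfAux2.evalOneAlgHom_apply, JPrfAux2.evalOne_sumCXpow, hTg]
    have hga : ((h a).toFinsupp.sum fun _ r => r) = g a := DFunLike.congr_fun hg a
    rw [← hga, map_finsuppSum (TensorAlgebra.ι k (M := A))]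
  have part3 : ∀ a : TensorAlgebra k A', ((Θ.comp Th) a).eval 1 = Tg a := fun a => by
    rw [← JPrfAux2.evalOneAlgHom_apply k, ← AlgHom.comp_apply, e3]
  -- Part 4 : coefficients in the kernel
  have e4 : (Polynomial.mapAlgHom (etaHom k A)).comp (Θ.comp Th)
      = (Unitization.lift ((JPrfAux2.toPUkHom k (A := A)).comp h)).comp (etaHom k A') := by
    refine TensorAlgebra.hom_ext (LinearMap.ext fun a => ?_)
    show (Polynomial.mapAlgHom (etaHom k A)) (Θ (Th (TensorAlgebra.ι k a)))
      = Unitization.lift ((JPrfAux2.toPUkHom k).comp h) (etaHom k A' (TensorAlgebra.ι k a))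
    rw [hι, JPrfAux2.etaHom_ι, JPrfAux.unit_lift_inr]
    rw [map_finsuppSum (Polynomial.mapAlgHom (etaHom k A))]
    show _ = JPrfAux2.toPUk k (h a)
    rw [JPrfAux2.toPUk]
    refine Finsupp.sum_congr fun i _ => ?_
    rw [Polynomial.coe_mapAlgHom]
    rw [Polynomial.map_mul, Polynomial.map_pow, Polynomial.map_C, Polynomial.map_X]
    simp only [RingHom.coe_coe]
    rw [JPrfAux2.etaHom_ι, Polynomial.C_mul_X_pow_eq_monomial]
  have part4 : ∀ a : TensorAlgebra k A', etaHom k A' a = 0 →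
      ∀ i : ℕ, etaHom k A (((Θ.comp Th) a).coeff i) = 0 := by
    intro a ha i
    have h0 : (Polynomial.mapAlgHom (etaHom k A)) ((Θ.comp Th) a) = 0 := by
      rw [← AlgHom.comp_apply, e4, AlgHom.comp_apply, ha, map_zero]
    rw [Polynomial.coe_mapAlgHom] at h0
    have h1 := congrArg (fun p => Polynomial.coeff p i) h0
    simp only [Polynomial.coeff_map, Polynomial.coeff_zero] at h1
    exact h1
  refine ⟨⟨Θ, hΘ, fun Θ' hΘ' => TensorAlgebra.hom_ext (LinearMap.ext fun p =>
    (hΘ' p).trans (hΘ p).symm)⟩, part2, part3, part4, ?_⟩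
  -- Part 5 : the homotopy of the restrictions
  intro Jf Jg hJf hJg
  have Hmem : ∀ (a : jIdeal k A') (i : ℕ), ((Θ.comp Th) (a : TensorAlgebra k A')).coeff i
      ∈ jIdeal k A := fun a i => part4 a a.2 i
  set S := jIdeal k A with hS
  -- the coefficient sequence of `H a`, valued in `jIdeal k A`
  let F : jIdeal k A' → (ℕ →₀ S) := fun a =>
    Finsupp.onFinset ((Θ.comp Th) (a : TensorAlgebra k A')).support
      (fun i => ⟨((Θ.comp Th) (a : TensorAlgebra k A')).coeff i, Hmem a i⟩)
      (fun i hi => Polynomial.mem_support_iff.mpr fun hc => hi (Subtype.ext hc))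
  have keyC : ∀ a : jIdeal k A',
      JPrfAux.coeNUP k S ⟨F a⟩ = (Θ.comp Th) (a : TensorAlgebra k A') := fun a =>
    Polynomial.ext fun n => by rw [JPrfAux.coeff_coeNUP]; rfl
  let H' : jIdeal k A' →ₙₐ[k] NUPoly S :=
    { toFun := fun a => ⟨F a⟩
      map_add' := fun a b => JPrfAux.coeNUP_injective k S <| by
        rw [JPrfAux.coeNUP_add, keyC, keyC, keyC]
        push_cast
        rw [map_add]
      map_smul' := fun c a => JPrfAux.coeNUP_injective k S <| by
        rw [JPrfAux.coeNUP_smul, keyC, keyC]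
        push_cast
        rw [map_smul, MonoidHom.id_apply]
      map_zero' := JPrfAux.coeNUP_injective k S <| by
        rw [keyC]
        push_cast
        rw [map_zero, JPrfAux.coeNUP, NUPoly.toFinsupp_zero, Finsupp.sum_zero_index]
      map_mul' := fun a b => JPrfAux.coeNUP_injective k S <| by
        rw [JPrfAux.coeNUP_mul, keyC, keyC, keyC]
        push_cast
        rw [map_mul] }
  have H'app : ∀ a : jIdeal k A', H' a = ⟨F a⟩ := fun _ => rfl
  have hF : ∀ (a : jIdeal k A') (i : ℕ),
      ((F a i : S) : TensorAlgebra k A) = ((Θ.comp Th) (a : TensorAlgebra k A')).coeff i :=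
    fun a i => rfl
  refine ⟨H', ?_, ?_⟩
  · refine NonUnitalAlgHom.ext fun a => Subtype.ext ?_
    rw [NonUnitalAlgHom.comp_apply, NUPoly.atZero_apply, H'app]
    exact (hF a 0).trans ((part2 (a : TensorAlgebra k A')).trans (hJf a).symm)
  · refine NonUnitalAlgHom.ext fun a => Subtype.ext ?_
    rw [NonUnitalAlgHom.comp_apply, H'app, JPrfAux.coe_coeffSum, keyC, part3]
    exact (hJg a).symm
end
end
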